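/- Let X be a metric space. Then there exists a bornologous injection from ℤ (with its usual metric) into X if and only if the wobbling group W(X) is not locally residually finite, i.e. there exists a finitely generated subgroup of W(X) that is not residually finite. -/

import Mathlib

/-- The wobbling group of a metric space: all permutations of bounded displacement. -/
def Wobbling (X : Type*) [MetricSpace X] : Subgroup (Equiv.Perm X) where
  carrier := {α : Equiv.Perm X | ∃ r : ℝ, ∀ x : X, dist x (α x) ≤ r}
  one_mem' := ⟨0, fun x => by simp⟩
  mul_mem' := by
    rintro a b ⟨r, hr⟩ ⟨s, hs⟩
    exact ⟨s + r, fun x =>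
      (dist_triangle x (b x) (a (b x))).trans (add_le_add (hs x) (hr (b x)))⟩
  inv_mem' := by
    rintro a ⟨r, hr⟩
    refine ⟨r, fun x => ?_⟩
    have := hr (a⁻¹ x)
    simpa [dist_comm] using this

/-- A map between metric spaces is bornologous if it maps pairs at uniformly bounded
distance to pairs at uniformly bounded distance. -/
def Bornologous {X Y : Type*} [MetricSpace X] [MetricSpace Y] (f : X → Y) : Prop :=
  ∀ r : ℝ, ∃ s : ℝ, ∀ x y : X, dist x y ≤ r → dist (f x) (f y) ≤ s

/-- A group is residually finite if every non-identity element survives in some finite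
quotient. -/
def IsResiduallyFinite (K : Type*) [Group K] : Prop :=
  ∀ k : K, k ≠ 1 → ∃ (F : Type) (_ : Group F) (_ : Finite F) (π : K →* F), π k ≠ 1

open Equiv

noncomputable def shiftZ : Perm ℤ := Equiv.addRight (1 : ℤ)

lemma shiftZ_pow_apply (n : ℕ) : ∀ x : ℤ, (shiftZ ^ n) x = x + n := by
  induction n with
  | zero => simp
  | succ k ih =>
      intro x
      rw [pow_succ', Perm.mul_apply, ih]
      simp [shiftZ]; ring

lemma shiftZ_conj_swap (n : ℕ) :
    shiftZ ^ n * Equiv.swap (0:ℤ) 1 * (shiftZ ^ n)⁻¹ = Equiv.swap (n : ℤ) (n + 1) := by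
  rw [← Equiv.swap_apply_apply, shiftZ_pow_apply, shiftZ_pow_apply]
  norm_num [add_comm]

lemma swap_commute_far (n : ℤ) (hn : 2 ≤ n) :
    Commute (Equiv.swap (0:ℤ) 1) (Equiv.swap n (n+1)) := by
  apply Equiv.Perm.Disjoint.commute
  intro x
  by_cases h0 : x = 0
  · right; subst h0; apply Equiv.swap_apply_of_ne_of_ne <;> omega
  by_cases h1 : x = 1
  · right; subst h1; apply Equiv.swap_apply_of_ne_of_ne <;> omega
  · left; exact Equiv.swap_apply_of_ne_of_ne h0 h1

lemma shiftZ_abs (x : ℤ) : |shiftZ x - x| ≤ 1 := by simp [shiftZ]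

lemma swap01_abs (x : ℤ) : |Equiv.swap (0:ℤ) 1 x - x| ≤ 1 := by
  by_cases h0 : x = 0
  · subst h0; simp
  by_cases h1 : x = 1
  · subst h1; simp
  · rw [Equiv.swap_apply_of_ne_of_ne h0 h1]; simp

lemma cyc_val : ((Equiv.swap (0:ℤ) 1 * Equiv.swap (1:ℤ) 2) ^ 2) 0 = 2 := by
  have : ((Equiv.swap (0:ℤ) 1 * Equiv.swap (1:ℤ) 2) ^ 2) 0
      = Equiv.swap (0:ℤ) 1 (Equiv.swap (1:ℤ) 2 (Equiv.swap (0:ℤ) 1 (Equiv.swap (1:ℤ) 2 0))) := by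
    rw [sq]; simp [Perm.mul_apply]
  rw [this,
    Equiv.swap_apply_of_ne_of_ne (show (0:ℤ) ≠ 1 by norm_num) (show (0:ℤ) ≠ 2 by norm_num),
    Equiv.swap_apply_left,
    Equiv.swap_apply_left,
    Equiv.swap_apply_of_ne_of_ne (show (2:ℤ) ≠ 0 by norm_num) (show (2:ℤ) ≠ 1 by norm_num)]

lemma forward_dir {X : Type*} [MetricSpace X] (f : ℤ → X) (hinj : Function.Injective f)
    (hb : Bornologous f) :
    ∃ H : Subgroup ↥(Wobbling X), H.FG ∧ ¬ IsResiduallyFinite ↥H := by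
  classical
  obtain ⟨s, hs⟩ := hb 1
  set ι : ℤ ↪ X := ⟨f, hinj⟩ with hι
  set Φ : Perm ℤ →* Perm X := Equiv.Perm.viaEmbeddingHom ι with hΦ
  have hΦapp : ∀ (e : Perm ℤ) (n : ℤ), Φ e (f n) = f (e n) := fun e n =>
    e.viaEmbedding_apply ι n
  have hΦdisp : ∀ e : Perm ℤ, (∀ x, |e x - x| ≤ 1) → ∀ x : X, dist x (Φ e x) ≤ max s 0 := by
    intro e he x
    by_cases hx : x ∈ Set.range ι
    · obtain ⟨n, rfl⟩ := hx
      have : Φ e (ι n) = ι (e n) := e.viaEmbedding_apply ι n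
      rw [this]
      refine le_max_of_le_left (hs n (e n) ?_)
      rw [Int.dist_eq]
      have h2 : |(n : ℤ) - e n| ≤ 1 := by rw [abs_sub_comm]; exact he n
      exact_mod_cast h2
    · have hfix : Φ e x = x := e.viaEmbedding_apply_of_notMem ι x hx
      rw [hfix]; simp
  set wt : ↥(Wobbling X) := ⟨Φ shiftZ, ⟨max s 0, hΦdisp shiftZ shiftZ_abs⟩⟩ with hwt'
  set wσ : ↥(Wobbling X) := ⟨Φ (Equiv.swap 0 1), ⟨max s 0, hΦdisp _ swap01_abs⟩⟩ with hwσ'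
  set H : Subgroup ↥(Wobbling X) := Subgroup.closure {wt, wσ} with hH
  have hwt : wt ∈ H := Subgroup.subset_closure (by simp)
  have hwσ : wσ ∈ H := Subgroup.subset_closure (by simp)
  refine ⟨H, ⟨({wt, wσ} : Finset _), by simp [hH]⟩, ?_⟩
  intro hRF
  set T : ↥H := ⟨wt, hwt⟩ with hT
  set S : ↥H := ⟨wσ, hwσ⟩ with hS
  set k : ↥H := (S * (T * S * T⁻¹)) ^ 2 with hk
  set j : ↥H →* Perm X := (Wobbling X).subtype.comp H.subtype with hjdef
  have hjT : j T = Φ shiftZ := rfl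
  have hjS : j S = Φ (Equiv.swap 0 1) := rfl
  have hconj1 : shiftZ * Equiv.swap (0:ℤ) 1 * shiftZ⁻¹ = Equiv.swap (1:ℤ) 2 := by
    have := shiftZ_conj_swap 1
    norm_num at this
    convert this using 2 <;> norm_num
  have hjk : j k = Φ ((Equiv.swap (0:ℤ) 1 * Equiv.swap (1:ℤ) 2) ^ 2) := by
    have h9 : (Equiv.swap (0:ℤ) 1 * Equiv.swap (1:ℤ) 2)
        = Equiv.swap (0:ℤ) 1 * (shiftZ * Equiv.swap (0:ℤ) 1 * shiftZ⁻¹) := by rw [hconj1]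
    rw [hk, h9, map_pow, map_mul, map_mul, map_mul, map_inv]
    simp only [map_pow, map_mul, map_inv, hjT, hjS]
  have hkne : k ≠ 1 := by
    intro h
    have h1 : Φ ((Equiv.swap (0:ℤ) 1 * Equiv.swap (1:ℤ) 2) ^ 2) = 1 := by
      rw [← hjk, h, map_one]
    have h2 : ((Equiv.swap (0:ℤ) 1 * Equiv.swap (1:ℤ) 2) ^ 2) = 1 :=
      Equiv.Perm.viaEmbeddingHom_injective ι (by rw [h1, map_one])
    have := cyc_val
    rw [h2] at this
    simp at this
  obtain ⟨F, hGF, hFF, π, hπ⟩ := hRF k hkne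
  apply hπ
  -- now show π k = 1
  have hjinj : Function.Injective j := by
    intro a b hab
    exact Subtype.ext (Subtype.ext hab)
  set m : ℕ := 2 * Nat.card F with hm
  have hm2 : (2:ℤ) ≤ (m + 1 : ℕ) := by
    have : 1 ≤ Nat.card F := Nat.card_pos
    omega
  -- relation A
  have relA : S * S = 1 := by
    apply hjinj
    rw [map_mul, hjS, ← map_mul, map_one]
    rw [Equiv.swap_mul_self, map_one]
  -- relation C
  have relZ : Equiv.swap (0:ℤ) 1 * (shiftZ^(m+1) * Equiv.swap (0:ℤ) 1 * (shiftZ^(m+1))⁻¹)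
      = (shiftZ^(m+1) * Equiv.swap (0:ℤ) 1 * (shiftZ^(m+1))⁻¹) * Equiv.swap (0:ℤ) 1 := by
    rw [shiftZ_conj_swap (m+1)]
    have := swap_commute_far ((m+1:ℕ):ℤ) hm2
    exact this.eq
  have relC : S * (T^(m+1) * S * (T^(m+1))⁻¹) = (T^(m+1) * S * (T^(m+1))⁻¹) * S := by
    apply hjinj
    have h := congrArg Φ relZ
    simp only [map_mul, map_inv, map_pow] at h
    simpa only [map_mul, map_inv, map_pow, hjT, hjS] using h
  -- push to F
  have ha : π S * π S = 1 := by rw [← map_mul, relA, map_one]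
  have hb2 : π (T * S * T⁻¹) * π (T * S * T⁻¹) = 1 := by
    have : (T * S * T⁻¹) * (T * S * T⁻¹) = T * (S * S) * T⁻¹ := by group
    rw [← map_mul, this, relA, mul_one, mul_inv_cancel, map_one]
  have hTpow : (π T) ^ (m + 1) = π T := by
    rw [pow_succ, hm, pow_mul', pow_card_eq_one', one_pow, one_mul]
  have hcb : π (T^(m+1) * S * (T^(m+1))⁻¹) = π (T * S * T⁻¹) := by
    rw [map_mul, map_mul, map_inv, map_pow, hTpow, map_mul, map_mul, map_inv]
  have hcomm : π S * π (T * S * T⁻¹) = π (T * S * T⁻¹) * π S := by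
    rw [← hcb, ← map_mul, ← map_mul, relC]

  calc π k = (π S * π (T * S * T⁻¹)) ^ 2 := by rw [hk, map_pow, map_mul]
    _ = π S * (π (T * S * T⁻¹) * π S) * π (T * S * T⁻¹) := by rw [sq]; group
    _ = (π S * π S) * (π (T * S * T⁻¹) * π (T * S * T⁻¹)) := by rw [← hcomm]; group
    _ = 1 := by rw [ha, hb2, one_mul]

lemma rf_of_orbits_finite {X : Type*} [MetricSpace X] (H : Subgroup ↥(Wobbling X))
    (hfin : ∀ x : X,
      Set.Finite {y | ∃ h : ↥H, ((Wobbling X).subtype.comp H.subtype) h x = y}) :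
    IsResiduallyFinite ↥H := by
  classical
  set ρ : ↥H →* Perm X := (Wobbling X).subtype.comp H.subtype with hρ
  intro h hne
  have hmoved : ∃ x : X, ρ h x ≠ x := by
    by_contra hc
    push_neg at hc
    exact hne (Subtype.ext (Subtype.ext (Equiv.ext hc)))
  obtain ⟨x, hx⟩ := hmoved
  set O : Set X := {y | ∃ g : ↥H, ρ g x = y} with hO
  have hmem : ∀ (g : ↥H) {y}, y ∈ O → ρ g y ∈ O := by
    rintro g y ⟨g', rfl⟩
    exact ⟨g * g', by rw [map_mul]; rfl⟩
  have hiff : ∀ (g : ↥H) (y : X), y ∈ O ↔ ρ g y ∈ O := by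
    intro g y
    constructor
    · exact hmem g
    · intro hy
      have h2 := hmem g⁻¹ hy
      rwa [map_inv, ← Perm.mul_apply, inv_mul_cancel, Perm.one_apply] at h2
  set π0 : ↥H →* Perm ↥O :=
    { toFun := fun g => (ρ g).subtypePerm (fun y => (hiff g y).symm)
      map_one' := by
        ext y
        simp [Perm.subtypePerm_apply]
      map_mul' := by
        intro a b
        ext y
        simp [Perm.subtypePerm_apply]
        rfl } with hπ0
  have hOfin : O.Finite := hfin x
  haveI : Finite ↥O := hOfin.to_subtype
  obtain ⟨n, ⟨e⟩⟩ := Finite.exists_equiv_fin ↥O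
  set φ : Perm ↥O →* Perm (Fin n) :=
    { toFun := fun q => (e.symm.trans q).trans e
      map_one' := by ext i; simp
      map_mul' := by intro a b; ext i; simp } with hφ
  refine ⟨Perm (Fin n), inferInstance, inferInstance, φ.comp π0, ?_⟩
  intro hcontra
  have hxO : x ∈ O := ⟨1, by simp⟩
  have h1 : (φ.comp π0) h (e ⟨x, hxO⟩) = e ⟨x, hxO⟩ := by rw [hcontra]; rfl
  have h2 : (φ.comp π0) h (e ⟨x, hxO⟩) = e ((π0 h) ⟨x, hxO⟩) := by
    simp [hφ, Equiv.trans_apply]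
  rw [h2] at h1
  have h3 : (π0 h) ⟨x, hxO⟩ = ⟨x, hxO⟩ := e.injective h1
  have h4 : ρ h x = x := congrArg Subtype.val h3
  exact hx h4

def reach {X : Type*} (T : Set (Equiv.Perm X)) (x0 : X) : ℕ → Set X
  | 0 => {x0}
  | n+1 => reach T x0 n ∪ ⋃ g ∈ T, g '' reach T x0 n

lemma reach_finite {X : Type*} (T : Set (Equiv.Perm X)) (hT : T.Finite) (x0 : X) :
    ∀ n, (reach T x0 n).Finite := by
  intro n
  induction n with
  | zero => exact Set.finite_singleton x0
  | succ k ih =>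
      exact ih.union (Set.Finite.biUnion hT (fun g _ => ih.image _))

lemma exists_seq {X : Type*} [MetricSpace X] (T : Set (Equiv.Perm X)) (hT : T.Finite)
    (r : ℝ) (hdisp : ∀ g ∈ T, ∀ x : X, dist x (g x) ≤ r) (x0 : X)
    (hinf : (⋃ n, reach T x0 n).Infinite) :
    ∃ u : ℕ → X, Function.Injective u ∧ ∀ n, dist (u n) (u (n+1)) ≤ r := by
  classical
  set U : Set X := ⋃ n, reach T x0 n with hU
  set wd : X → ℕ := fun y => if h : ∃ n, y ∈ reach T x0 n then Nat.find h else 0 with hwd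
  have w1 : ∀ y ∈ U, y ∈ reach T x0 (wd y) := by
    intro y hy
    rw [Set.mem_iUnion] at hy
    simp only [hwd, dif_pos hy]
    exact Nat.find_spec hy
  have w2 : ∀ (y : X) (n : ℕ), y ∈ reach T x0 n → wd y ≤ n := by
    intro y n hy
    have hex : ∃ m, y ∈ reach T x0 m := ⟨n, hy⟩
    simp only [hwd, dif_pos hex]
    exact Nat.find_min' hex hy
  have w3 : ∀ y ∈ U, wd y = 0 → y = x0 := by
    intro y hy h0
    have := w1 y hy
    rw [h0] at this
    exact this
  have hx0U : x0 ∈ U := Set.mem_iUnion.2 ⟨0, rfl⟩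
  have key : ∀ y ∈ U, 0 < wd y → ∃ z, z ∈ U ∧ wd z < wd y ∧ ∃ g ∈ T, g z = y := by
    intro y hy hpos
    obtain ⟨m, hm⟩ : ∃ m, wd y = m + 1 := ⟨wd y - 1, by omega⟩
    have hym : y ∉ reach T x0 m := by
      intro hc
      have := w2 y m hc
      omega
    have hy1 : y ∈ reach T x0 (m+1) := by rw [← hm]; exact w1 y hy
    rcases hy1 with h | h
    · exact absurd h hym
    · rw [Set.mem_iUnion₂] at h
      obtain ⟨g, hgT, z, hz, hgz⟩ := h
      refine ⟨z, Set.mem_iUnion.2 ⟨m, hz⟩, ?_, g, hgT, hgz⟩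
      have := w2 z m hz
      omega
  set p : X → X := fun y =>
    if h : y ∈ U ∧ 0 < wd y then (key y h.1 h.2).choose else x0 with hp
  have pspec : ∀ y (h : y ∈ U ∧ 0 < wd y),
      p y ∈ U ∧ wd (p y) < wd y ∧ ∃ g ∈ T, g (p y) = y := by
    intro y h
    simp only [hp, dif_pos h]
    exact (key y h.1 h.2).choose_spec
  have pU : ∀ y ∈ U, p y ∈ U := by
    intro y hy
    by_cases h : y ∈ U ∧ 0 < wd y
    · exact (pspec y h).1
    · simp only [hp, dif_neg h]; exact hx0U
  have pitU : ∀ (j : ℕ) (y : X), y ∈ U → p^[j] y ∈ U := by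
    intro j
    induction j with
    | zero => intro y hy; exact hy
    | succ k ih => intro y hy; rw [Function.iterate_succ_apply]; exact ih _ (pU y hy)
  -- the key dichotomy at a point c ≠ p c
  have hpd : ∀ c ∈ U, c ≠ p c → wd (p c) < wd c ∧ dist (p c) c ≤ r := by
    intro c hc hne
    by_cases h : c ∈ U ∧ 0 < wd c
    · obtain ⟨h1, h2, g, hgT, hgc⟩ := pspec c h
      refine ⟨h2, ?_⟩
      calc dist (p c) c = dist (p c) (g (p c)) := by rw [hgc]
        _ ≤ r := hdisp g hgT _
    · exfalso
      have h0 : wd c = 0 := by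
        rcases not_and_or.1 h with h' | h'
        · exact absurd hc h'
        · omega
      have hcx0 : c = x0 := w3 c hc h0
      apply hne
      have hpcx : p c = x0 := by simp only [hp, dif_neg h]
      rw [hpcx, hcx0]
  set Desc : X → Set X := fun z => {y | y ∈ U ∧ ∃ k, p^[k] y = z} with hDesc
  have F1 : ∀ n, ∀ y ∈ U, wd y ≤ n → ∃ k, p^[k] y = x0 := by
    intro n
    induction n with
    | zero =>
        intro y hy hle
        exact ⟨0, w3 y hy (by omega)⟩
    | succ n ih =>
        intro y hy hle
        by_cases h0 : wd y = 0
        · exact ⟨0, w3 y hy h0⟩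
        · have h : y ∈ U ∧ 0 < wd y := ⟨hy, by omega⟩
          obtain ⟨h1, h2, -⟩ := pspec y h
          obtain ⟨k, hk⟩ := ih (p y) h1 (by omega)
          exact ⟨k + 1, by rw [Function.iterate_succ_apply]; exact hk⟩
  have hDx0 : (Desc x0).Infinite := by
    apply Set.Infinite.mono ?_ hinf
    intro y hy
    exact ⟨hy, F1 (wd y) y hy le_rfl⟩
  have F3 : ∀ z ∈ U, (Desc z).Infinite →
      ∃ c, c ∈ U ∧ c ≠ z ∧ p c = z ∧ (Desc c).Infinite := by
    intro z hz hI
    set Ch : Set X := {c | c ∈ U ∧ p c = z ∧ c ≠ z} with hCh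
    have hChfin : Ch.Finite := by
      apply Set.Finite.subset ((hT.image (fun g => g z)))
      rintro c ⟨hcU, hpc, hcne⟩
      have hcond : c ∈ U ∧ 0 < wd c := by
        refine ⟨hcU, ?_⟩
        by_contra h0
        push_neg at h0
        have h0' : wd c = 0 := by omega
        have hcx0 : c = x0 := w3 c hcU h0'
        have hpcx : p c = x0 := by
          simp only [hp, dif_neg (show ¬(c ∈ U ∧ 0 < wd c) from fun hh => by omega)]
        exact hcne (hcx0.trans (hpcx.symm.trans hpc))
      obtain ⟨-, -, g, hgT, hgc⟩ := pspec c hcond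
      exact ⟨g, hgT, by rw [← hpc]; exact hgc⟩
    have hsub : Desc z \ {z} ⊆ ⋃ c ∈ Ch, Desc c := by
      rintro y ⟨⟨hyU, k, hk⟩, hyne⟩
      have hex : ∃ k, p^[k] y = z := ⟨k, hk⟩
      have hk0 := Nat.find_spec hex
      have hk0pos : 0 < Nat.find hex := by
        rcases Nat.eq_zero_or_pos (Nat.find hex) with h | h
        · exfalso; apply hyne; rw [h] at hk0; exact hk0
        · exact h
      have hc1 : p (p^[Nat.find hex - 1] y) = z := by
        have h9 : Nat.find hex - 1 + 1 = Nat.find hex := by omega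
        have h8 : p^[Nat.find hex] y = p (p^[Nat.find hex - 1] y) := by
          conv_lhs => rw [← h9]
          rw [Function.iterate_succ_apply']
        rw [← h8]
        exact hk0
      have hcU : p^[Nat.find hex - 1] y ∈ U := pitU _ y hyU
      have hcne : p^[Nat.find hex - 1] y ≠ z := by
        intro h
        exact Nat.find_min hex (show Nat.find hex - 1 < Nat.find hex by omega) h
      refine Set.mem_biUnion (show p^[Nat.find hex - 1] y ∈ Ch from ⟨hcU, hc1, hcne⟩) ?_
      exact ⟨hyU, Nat.find hex - 1, rfl⟩
    by_contra hcon
    push_neg at hcon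
    have hallfin : ∀ c ∈ Ch, (Desc c).Finite := by
      rintro c ⟨hcU, hpc, hcne⟩
      by_contra hcf
      exact hcf (hcon c hcU hcne hpc)
    have : (Desc z \ {z}).Finite :=
      Set.Finite.subset (Set.Finite.biUnion hChfin hallfin) hsub
    have : (Desc z).Finite := by
      have := this.union (Set.finite_singleton z)
      apply this.subset
      intro y hy
      by_cases h : y = z
      · right; exact h
      · left; exact ⟨hy, h⟩
    exact hI this
  -- build the sequence
  set Z := {z : X // z ∈ U ∧ (Desc z).Infinite} with hZ
  have step : ∀ z : Z, ∃ c : Z, c.1 ≠ z.1 ∧ p c.1 = z.1 := by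
    rintro ⟨z, hzU, hzI⟩
    obtain ⟨c, hcU, hcne, hpc, hcI⟩ := F3 z hzU hzI
    exact ⟨⟨c, hcU, hcI⟩, hcne, hpc⟩
  let seq : ℕ → Z := fun n => Nat.rec ⟨x0, hx0U, hDx0⟩ (fun _ z => (step z).choose) n
  have hseq : ∀ n, (seq (n+1)).1 ≠ (seq n).1 ∧ p (seq (n+1)).1 = (seq n).1 :=
    fun n => (step (seq n)).choose_spec
  set u : ℕ → X := fun n => (seq n).1 with hu
  have hdist : ∀ n, dist (u n) (u (n+1)) ≤ r := by
    intro n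
    obtain ⟨hne, hpc⟩ := hseq n
    have := hpd (u (n+1)) (seq (n+1)).2.1 (by rw [hpc]; exact hne)
    rw [hpc] at this
    exact this.2
  have hmono : StrictMono (fun n => wd (u n)) := by
    apply strictMono_nat_of_lt_succ
    intro n
    obtain ⟨hne, hpc⟩ := hseq n
    have := hpd (u (n+1)) (seq (n+1)).2.1 (by rw [hpc]; exact hne)
    rw [hpc] at this
    exact this.1
  refine ⟨u, ?_, hdist⟩
  intro a b hab
  exact hmono.injective (congrArg wd hab)

lemma bornologous_of_seq {X : Type*} [MetricSpace X] (u : ℕ → X)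
    (hinj : Function.Injective u) (r : ℝ) (hd : ∀ n, dist (u n) (u (n+1)) ≤ r) :
    ∃ f : ℤ → X, Function.Injective f ∧ Bornologous f := by
  have hr : 0 ≤ r := le_trans dist_nonneg (hd 0)
  have chain : ∀ i k : ℕ, dist (u i) (u (i+k)) ≤ r * k := by
    intro i k
    induction k with
    | zero => simp
    | succ k ih =>
        calc dist (u i) (u (i+(k+1)))
            ≤ dist (u i) (u (i+k)) + dist (u (i+k)) (u ((i+k)+1)) := by
              have h9 : i + (k+1) = (i+k)+1 := by omega
              rw [h9]; exact dist_triangle _ _ _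
          _ ≤ r * k + r := add_le_add ih (hd _)
          _ = r * (k+1:ℕ) := by push_cast; ring
  have chain2 : ∀ i j : ℕ, dist (u i) (u j) ≤ r * |(i:ℝ) - j| := by
    intro i j
    rcases le_total i j with h | h
    · obtain ⟨k, rfl⟩ : ∃ k, j = i + k := ⟨j - i, by omega⟩
      have h9 : ((i:ℝ) - ((i+k:ℕ):ℝ)) = -(k:ℝ) := by push_cast; ring
      rw [h9, abs_neg, abs_of_nonneg (by positivity : (0:ℝ) ≤ (k:ℝ))]
      exact chain i k
    · obtain ⟨k, rfl⟩ : ∃ k, i = j + k := ⟨i - j, by omega⟩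
      have h9 : (((j+k:ℕ):ℝ) - (j:ℝ)) = (k:ℝ) := by push_cast; ring
      rw [h9, abs_of_nonneg (by positivity : (0:ℝ) ≤ (k:ℝ)), dist_comm]
      exact chain j k
  classical
  set foldN : ℤ → ℕ := fun n => if 0 ≤ n then (2*n).toNat else (2*(-n) - 1).toNat
    with hfoldN
  refine ⟨fun n => u (foldN n), ?_, ?_⟩
  · intro a b hab
    have h1 : foldN a = foldN b := hinj hab
    simp only [hfoldN] at h1
    split_ifs at h1 <;> omega
  · intro ρ
    refine ⟨r * (2*ρ+1), ?_⟩
    intro a b hab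
    rw [Int.dist_eq] at hab
    have key : (foldN a - foldN b : ℤ).natAbs ≤ 2 * (a - b).natAbs + 1 := by
      simp only [hfoldN]
      split_ifs <;> omega
    have h1 : |(foldN a : ℝ) - (foldN b : ℝ)| = (((foldN a : ℤ) - foldN b).natAbs : ℝ) := by
      rw [Nat.cast_natAbs]
      congr 1
      push_cast
      ring
    have h2 : |(a:ℝ) - (b:ℝ)| = (((a - b).natAbs : ℕ) : ℝ) := by
      rw [Nat.cast_natAbs]
      congr 1
      push_cast
      ring
    have key2 : |(foldN a : ℝ) - (foldN b : ℝ)| ≤ 2 * |(a:ℝ) - (b:ℝ)| + 1 := by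
      rw [h1, h2]
      exact_mod_cast key
    calc dist (u (foldN a)) (u (foldN b)) ≤ r * |(foldN a : ℝ) - (foldN b : ℝ)| :=
          chain2 _ _
      _ ≤ r * (2*ρ+1) := by
          apply mul_le_mul_of_nonneg_left _ hr
          linarith


open Equiv

lemma exists_bound {X : Type*} [MetricSpace X] (T : Set (Perm X)) (hT : T.Finite)
    (h : ∀ g ∈ T, ∃ r : ℝ, ∀ x, dist x (g x) ≤ r) :
    ∃ r : ℝ, 0 ≤ r ∧ ∀ g ∈ T, ∀ x, dist x (g x) ≤ r := by
  refine Set.Finite.induction_on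
    (motive := fun s _ => (∀ g ∈ s, ∃ r : ℝ, ∀ x, dist x (g x) ≤ r) →
      ∃ r : ℝ, 0 ≤ r ∧ ∀ g ∈ s, ∀ x, dist x (g x) ≤ r) T hT ?_ ?_ h
  · intro _
    exact ⟨0, le_refl _, fun g hg => absurd hg (Set.notMem_empty g)⟩
  · intro a s ha hs ih hins
    obtain ⟨r, hr0, hr⟩ := ih (fun g hg => hins g (Set.mem_insert_of_mem _ hg))
    obtain ⟨ra, hra⟩ := hins _ (Set.mem_insert _ _)
    refine ⟨max r ra, le_trans hr0 (le_max_left _ _), ?_⟩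
    rintro g (rfl | hg) x
    · exact le_trans (hra x) (le_max_right _ _)
    · exact le_trans (hr g hg x) (le_max_left _ _)

lemma reverse_dir {X : Type*} [MetricSpace X] (H : Subgroup ↥(Wobbling X)) (hFG : H.FG)
    (hnRF : ¬ IsResiduallyFinite ↥H) :
    ∃ f : ℤ → X, Function.Injective f ∧ Bornologous f := by
  classical
  by_cases hall : ∀ x : X,
      Set.Finite {y | ∃ h : ↥H, ((Wobbling X).subtype.comp H.subtype) h x = y}
  · exact absurd (rf_of_orbits_finite H hall) hnRF
  push_neg at hall
  obtain ⟨x0, hx0⟩ := hall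
  obtain ⟨S, hS⟩ := hFG
  set T : Set (Perm X) :=
    (fun g : ↥(Wobbling X) => (g : Perm X)) '' ↑S
      ∪ (fun g : ↥(Wobbling X) => (g : Perm X)⁻¹) '' ↑S with hTdef
  have hTfin : T.Finite := (S.finite_toSet.image _).union (S.finite_toSet.image _)
  have hTbound : ∀ g ∈ T, ∃ r : ℝ, ∀ x, dist x (g x) ≤ r := by
    rintro g (⟨a, ha, rfl⟩ | ⟨a, ha, rfl⟩)
    · exact a.2
    · exact (Wobbling X).inv_mem a.2
  obtain ⟨r, hr0, hrb⟩ := exists_bound T hTfin hTbound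
  set U : Set X := ⋃ n, reach T x0 n with hUdef
  have hTU : ∀ g ∈ T, ∀ y ∈ U, g y ∈ U := by
    intro g hg y hy
    rw [hUdef, Set.mem_iUnion] at hy ⊢
    obtain ⟨n, hn⟩ := hy
    exact ⟨n+1, Or.inr (Set.mem_biUnion hg ⟨y, hn, rfl⟩)⟩
  have hinv : ∀ g : ↥(Wobbling X), g ∈ Subgroup.closure (↑S : Set ↥(Wobbling X)) →
      ∀ y ∈ U, (g : Perm X) y ∈ U ∧ ((g : Perm X))⁻¹ y ∈ U := by
    intro g hg
    induction hg using Subgroup.closure_induction with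
    | mem a ha =>
        intro y hy
        exact ⟨hTU _ (Or.inl ⟨a, ha, rfl⟩) y hy, hTU _ (Or.inr ⟨a, ha, rfl⟩) y hy⟩
    | one =>
        intro y hy
        constructor
        · simpa using hy
        · simpa using hy
    | mul a b ha hb iha ihb =>
        intro y hy
        constructor
        · have h1 := (ihb y hy).1
          have h2 := (iha _ h1).1
          simpa [Perm.mul_apply] using h2
        · have h1 := (iha y hy).2
          have h2 := (ihb _ h1).2
          simpa [mul_inv_rev, Perm.mul_apply] using h2
    | inv a ha iha =>
        intro y hy
        have h1 := iha y hy
        simpa using ⟨h1.2, h1.1⟩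
  have hx0U : x0 ∈ U := Set.mem_iUnion.2 ⟨0, rfl⟩
  have horb : {y | ∃ h : ↥H, ((Wobbling X).subtype.comp H.subtype) h x0 = y} ⊆ U := by
    rintro y ⟨h, rfl⟩
    obtain ⟨g, hg⟩ := h
    have hg2 := hg
    rw [← hS] at hg2
    exact (hinv _ hg2 x0 hx0U).1
  have hUinf : U.Infinite := Set.Infinite.mono horb hx0
  obtain ⟨u, huinj, hud⟩ := exists_seq T hTfin r hrb x0 hUinf
  exact bornologous_of_seq u huinj r hud

/-- A metric space `X` admits a bornologous injection of `ℤ` if and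
only if the wobbling group of `X` is not locally residually finite. -/
theorem stmt_15 {X : Type*} [MetricSpace X] :
    (∃ f : ℤ → X, Function.Injective f ∧ Bornologous f) ↔
      ∃ H : Subgroup ↥(Wobbling X), H.FG ∧ ¬ IsResiduallyFinite ↥H := by
  constructor
  · rintro ⟨f, hinj, hb⟩
    exact forward_dir f hinj hb
  · rintro ⟨H, hFG, hnRF⟩
    exact reverse_dir H hFG hnRF
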